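/- Let n ≥ 2, let α = (α_{ij}) be real parameters indexed by wedges with α_{ij} ≥ 0 for all wedges, and h = (h_i) arbitrary real parameters indexed by edges. Then for any subsets E, F ⊆ E_n the partition functions of the restricted systems satisfy Z_{E;α,h} · Z_{F;α,h} ≤ Z_{E∪F;α,h} · Z_{E∩F;α,h}. -/
import Mathlib


open Finset

/-- Edges of the complete graph on `n` labeled vertices. -/
def Edge (n : ℕ) : Type := {e : Sym2 (Fin n) // ¬ e.IsDiag}

instance (n : ℕ) : Fintype (Edge n) := by unfold Edge; infer_instance
instance (n : ℕ) : DecidableEq (Edge n) := by unfold Edge; infer_instance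

/-- Two distinct edges are neighbors (they form a wedge) when they share a vertex. -/
def EdgeAdj {n : ℕ} (i j : Edge n) : Prop := i ≠ j ∧ ∃ v, v ∈ i.1 ∧ v ∈ j.1

instance {n : ℕ} (i j : Edge n) : Decidable (EdgeAdj i j) := by
  unfold EdgeAdj; infer_instance

/-- Hamiltonian `H_{n;α,h}(x) = (1/n) Σ_{{i,j} ∈ W_n} α_{ij} x_i x_j + Σ_i h_i x_i`,
where the sum over unordered wedges of the symmetric collection `α` is written as
half of the sum over ordered adjacent pairs. -/
noncomputable def Ham (n : ℕ) (α : Edge n → Edge n → ℝ) (h : Edge n → ℝ)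
    (x : Edge n → Fin 2) : ℝ :=
  (1 / (2 * (n : ℝ))) * ∑ i : Edge n, ∑ j : Edge n,
      (if EdgeAdj i j then α i j * ((x i : ℕ) : ℝ) * ((x j : ℕ) : ℝ) else 0)
    + ∑ i : Edge n, h i * ((x i : ℕ) : ℝ)

/-- Partition function. -/
noncomputable def Zpart (n : ℕ) (α : Edge n → Edge n → ℝ) (h : Edge n → ℝ) : ℝ :=
  ∑ x : Edge n → Fin 2, Real.exp (Ham n α h x)

/-- Gibbs measure. -/
noncomputable def gibbs (n : ℕ) (α : Edge n → Edge n → ℝ) (h : Edge n → ℝ)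
    (x : Edge n → Fin 2) : ℝ :=
  Real.exp (Ham n α h x) / Zpart n α h

/-- Expectation with respect to the Gibbs measure. -/
noncomputable def expect (n : ℕ) (α : Edge n → Edge n → ℝ) (h : Edge n → ℝ)
    (f : (Edge n → Fin 2) → ℝ) : ℝ :=
  ∑ x : Edge n → Fin 2, f x * gibbs n α h x

/-- `x_C = Π_{i ∈ C} x_i`. -/
def prodOn {n : ℕ} (C : Finset (Edge n)) (x : Edge n → Fin 2) : ℝ :=
  ∏ i ∈ C, ((x i : ℕ) : ℝ)

/-- Restricted Hamiltonian on a subset `A` of edges. -/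
noncomputable def HamR (n : ℕ) (A : Finset (Edge n)) (α : Edge n → Edge n → ℝ)
    (h : Edge n → ℝ) (x : Edge n → Fin 2) : ℝ :=
  (1 / (2 * (n : ℝ))) * ∑ i ∈ A, ∑ j ∈ A,
      (if EdgeAdj i j then α i j * ((x i : ℕ) : ℝ) * ((x j : ℕ) : ℝ) else 0)
    + ∑ i ∈ A, h i * ((x i : ℕ) : ℝ)

/-- The copy of `{0,1}^A` inside `{0,1}^{E_n}`: configurations vanishing outside `A`. -/
def confR (n : ℕ) (A : Finset (Edge n)) : Finset (Edge n → Fin 2) :=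
  Finset.univ.filter (fun x => ∀ i ∉ A, x i = 0)

/-- Restricted partition function `Z_{A;α,h}`. -/
noncomputable def ZR (n : ℕ) (A : Finset (Edge n)) (α : Edge n → Edge n → ℝ)
    (h : Edge n → ℝ) : ℝ :=
  ∑ x ∈ confR n A, Real.exp (HamR n A α h x)

/-- Restricted expectation `E_{A;α,h}`. -/
noncomputable def expectR (n : ℕ) (A : Finset (Edge n)) (α : Edge n → Edge n → ℝ)
    (h : Edge n → ℝ) (f : (Edge n → Fin 2) → ℝ) : ℝ :=
  (∑ x ∈ confR n A, f x * Real.exp (HamR n A α h x)) / ZR n A α h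

/-- Lemma 3.9: if `α ≥ 0` on wedges, then the restricted partition
functions satisfy `Z_E Z_F ≤ Z_{E ∪ F} Z_{E ∩ F}`. -/
lemma addkey : ∀ u v : Fin 2, ((u ⊓ v : Fin 2) : ℕ) + ((u ⊔ v : Fin 2) : ℕ) = (u : ℕ) + (v : ℕ) := by
  decide

lemma mulkey : ∀ u v u' v' : Fin 2,
    (u:ℕ)*(u':ℕ) + (v:ℕ)*(v':ℕ) ≤
      ((u⊓v : Fin 2):ℕ)*((u'⊓v' : Fin 2):ℕ) + ((u⊔v : Fin 2):ℕ)*((u'⊔v' : Fin 2):ℕ) := by decide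

lemma inf0l : ∀ v : Fin 2, (0 : Fin 2) ⊓ v = 0 := by decide
lemma inf0r : ∀ v : Fin 2, v ⊓ (0 : Fin 2) = 0 := by decide

/-- On supported configurations, the restricted Hamiltonian equals the full one. -/
lemma hamR_eq_univ (n : ℕ) (A : Finset (Edge n)) (α : Edge n → Edge n → ℝ)
    (h : Edge n → ℝ) (x : Edge n → Fin 2) (hx : ∀ i ∉ A, x i = 0) :
    HamR n A α h x = HamR n Finset.univ α h x := by
  unfold HamR
  congr 1
  · congr 1
    have h1 : ∀ i : Edge n, (∑ j ∈ A, (if EdgeAdj i j then α i j * ((x i : ℕ) : ℝ) * ((x j : ℕ) : ℝ) else 0)) =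
        ∑ j ∈ Finset.univ, (if EdgeAdj i j then α i j * ((x i : ℕ) : ℝ) * ((x j : ℕ) : ℝ) else 0) := by
      intro i
      refine Finset.sum_subset (Finset.subset_univ A) ?_
      intro j _ hj
      rw [hx j hj]
      simp
    calc (∑ i ∈ A, ∑ j ∈ A, (if EdgeAdj i j then α i j * ((x i : ℕ) : ℝ) * ((x j : ℕ) : ℝ) else 0))
        = ∑ i ∈ A, ∑ j ∈ Finset.univ, (if EdgeAdj i j then α i j * ((x i : ℕ) : ℝ) * ((x j : ℕ) : ℝ) else 0) :=
          Finset.sum_congr rfl fun i _ => h1 i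
      _ = ∑ i ∈ Finset.univ, ∑ j ∈ Finset.univ, (if EdgeAdj i j then α i j * ((x i : ℕ) : ℝ) * ((x j : ℕ) : ℝ) else 0) := by
          refine Finset.sum_subset (Finset.subset_univ A) ?_
          intro i _ hi
          apply Finset.sum_eq_zero
          intro j _
          rw [hx i hi]
          simp
  · refine Finset.sum_subset (Finset.subset_univ A) ?_
    intro i _ hi
    rw [hx i hi]
    simp

lemma ham_super (n : ℕ) (α : Edge n → Edge n → ℝ) (h : Edge n → ℝ)
    (hα : ∀ i j, EdgeAdj i j → 0 ≤ α i j) (a b : Edge n → Fin 2) :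
    HamR n Finset.univ α h a + HamR n Finset.univ α h b ≤
      HamR n Finset.univ α h (a ⊓ b) + HamR n Finset.univ α h (a ⊔ b) := by
  unfold HamR
  have hc : (0:ℝ) ≤ 1 / (2 * (n : ℝ)) := by positivity
  have hL : (∑ i ∈ (Finset.univ : Finset (Edge n)), h i * ((a i : ℕ) : ℝ)) +
      ∑ i ∈ (Finset.univ : Finset (Edge n)), h i * ((b i : ℕ) : ℝ) =
      (∑ i ∈ (Finset.univ : Finset (Edge n)), h i * (((a ⊓ b) i : ℕ) : ℝ)) +
      ∑ i ∈ (Finset.univ : Finset (Edge n)), h i * (((a ⊔ b) i : ℕ) : ℝ) := by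
    rw [← Finset.sum_add_distrib, ← Finset.sum_add_distrib]
    apply Finset.sum_congr rfl
    intro i _
    rw [← mul_add, ← mul_add]
    congr 1
    have := addkey (a i) (b i)
    rw [Pi.inf_apply, Pi.sup_apply]
    exact_mod_cast this.symm
  have hS : (∑ i : Edge n, ∑ j : Edge n,
        (if EdgeAdj i j then α i j * ((a i : ℕ) : ℝ) * ((a j : ℕ) : ℝ) else 0)) +
      ∑ i : Edge n, ∑ j : Edge n,
        (if EdgeAdj i j then α i j * ((b i : ℕ) : ℝ) * ((b j : ℕ) : ℝ) else 0) ≤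
      (∑ i : Edge n, ∑ j : Edge n,
        (if EdgeAdj i j then α i j * (((a ⊓ b) i : ℕ) : ℝ) * (((a ⊓ b) j : ℕ) : ℝ) else 0)) +
      ∑ i : Edge n, ∑ j : Edge n,
        (if EdgeAdj i j then α i j * (((a ⊔ b) i : ℕ) : ℝ) * (((a ⊔ b) j : ℕ) : ℝ) else 0) := by
    rw [← Finset.sum_add_distrib, ← Finset.sum_add_distrib]
    apply Finset.sum_le_sum
    intro i _
    rw [← Finset.sum_add_distrib, ← Finset.sum_add_distrib]
    apply Finset.sum_le_sum
    intro j _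
    by_cases hij : EdgeAdj i j
    · simp only [hij, if_true]
      have key : ((a i : ℕ):ℝ) * ((a j : ℕ):ℝ) + ((b i : ℕ):ℝ) * ((b j : ℕ):ℝ) ≤
          (((a ⊓ b) i : ℕ):ℝ) * (((a ⊓ b) j : ℕ):ℝ) +
          (((a ⊔ b) i : ℕ):ℝ) * (((a ⊔ b) j : ℕ):ℝ) := by
        have := mulkey (a i) (b i) (a j) (b j)
        rw [Pi.inf_apply, Pi.sup_apply, Pi.inf_apply, Pi.sup_apply]
        exact_mod_cast this
      have := mul_le_mul_of_nonneg_left key (hα i j hij)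
      nlinarith [this]
    · simp [hij]
  nlinarith [mul_le_mul_of_nonneg_left hS hc]


theorem partition_function_supermodular (n : ℕ) (hn : 2 ≤ n)
    (E F : Finset (Edge n))
    (α : Edge n → Edge n → ℝ) (h : Edge n → ℝ)
    (hsym : ∀ i j, α i j = α j i)
    (hα : ∀ i j, EdgeAdj i j → 0 ≤ α i j) :
    ZR n E α h * ZR n F α h ≤ ZR n (E ∪ F) α h * ZR n (E ∩ F) α h := by
    classical
  set f : Finset (Edge n) → (Edge n → Fin 2) → ℝ := fun A x =>
    if ∀ i ∉ A, x i = 0 then Real.exp (HamR n A α h x) else 0 with hf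
  have hZ : ∀ A, ZR n A α h = ∑ x, f A x := by
    intro A
    rw [ZR, confR, Finset.sum_filter]
  have hnn : ∀ A x, (0:ℝ) ≤ f A x := by
    intro A x
    simp only [hf]
    split <;> positivity
  have hnn' : ∀ A, (0 : (Edge n → Fin 2) → ℝ) ≤ f A := fun A x => hnn A x
  have key : ∀ a b, f E a * f F b ≤ f (E ∩ F) (a ⊓ b) * f (E ∪ F) (a ⊔ b) := by
    intro a b
    simp only [hf]
    by_cases hA : ∀ i ∉ E, a i = 0
    · by_cases hB : ∀ i ∉ F, b i = 0
      · have hinf : ∀ i ∉ E ∩ F, (a ⊓ b) i = 0 := by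
          intro i hi
          rw [Finset.mem_inter] at hi
          push_neg at hi
          rw [Pi.inf_apply]
          by_cases hiE : i ∈ E
          · rw [hB i (hi hiE), inf0r]
          · rw [hA i hiE, inf0l]
        have hsup : ∀ i ∉ E ∪ F, (a ⊔ b) i = 0 := by
          intro i hi
          rw [Finset.mem_union] at hi
          push_neg at hi
          rw [Pi.sup_apply, hA i hi.1, hB i hi.2]
          simp
        rw [if_pos hA, if_pos hB, if_pos hinf, if_pos hsup,
← Real.exp_add, ← Real.exp_add, Real.exp_le_exp,
          hamR_eq_univ n E α h a hA, hamR_eq_univ n F α h b hB,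
          hamR_eq_univ n (E ∩ F) α h (a ⊓ b) hinf, hamR_eq_univ n (E ∪ F) α h (a ⊔ b) hsup]
        exact ham_super n α h hα a b
      · simp only [hB, if_false, mul_zero]
        exact mul_nonneg (hnn (E ∩ F) _) (hnn (E ∪ F) _)
    · simp only [hA, if_false, zero_mul]
      exact mul_nonneg (hnn (E ∩ F) _) (hnn (E ∪ F) _)
  rw [hZ, hZ, hZ, hZ, mul_comm (∑ x, f (E ∪ F) x)]
  exact four_functions_theorem_univ (f E) (f F) (f (E ∩ F)) (f (E ∪ F))
    (hnn' E) (hnn' F) (hnn' (E ∩ F)) (hnn' (E ∪ F)) key
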